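/- arXiv:1307.1056 — 3 statements merged into one kernel-verified Lean document; each statement's English description precedes it below -/
import Mathlib

section
/- Let O ⊆ ℝ^n be open, T > 0, and let X : O × [0,T] → ℝ^{n+1} be C² such that for each (θ,t) the metric matrix g_{ij}(θ,t) := ∂_{θ_i}X · ∂_{θ_j}X (i,j = 1,…,n) is invertible, with inverse (g^{ij}). Let U : O × [0,T] → ℝ be C² and set V := ∂_t X (components V^r, r = 1,…,n+1). For a scalar function W : O × [0,T] → ℝ define its tangential gradient components D_l W := Σ_{i,j} g^{ij} (∂_{θ_j}W)(∂_{θ_i}X^l), l = 1,…,n+1, and define the projection P_{sl} := Σ_{i,j} g^{ij} (∂_{θ_i}X^s)(∂_{θ_j}X^l). Then for every l = 1,…,n+1 and every (θ,t): ∂_t (D_l U) = D_l(∂_t U) − Σ_{r=1}^{n+1} A_{lr} D_r U, where A_{lr} := D_l V^r + Σ_{s=1}^{n+1} P_{sl} D_r V^s − D_r V^l. -/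
open scoped BigOperators
open Matrix

/-- Partial derivative in the parameter direction `θ_i`, taken within the set `S`,
for a scalar function of `(θ, t) ∈ ℝ^n × ℝ`. -/
noncomputable def dtheta {n : ℕ} (S : Set ((Fin n → ℝ) × ℝ)) (W : (Fin n → ℝ) × ℝ → ℝ)
    (i : Fin n) (p : (Fin n → ℝ) × ℝ) : ℝ :=
  fderivWithin ℝ W S p (Pi.single i 1, 0)

/-- Partial derivative in the time direction, taken within the set `S`. -/
noncomputable def dtime {n : ℕ} (S : Set ((Fin n → ℝ) × ℝ)) (W : (Fin n → ℝ) × ℝ → ℝ)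
    (p : (Fin n → ℝ) × ℝ) : ℝ :=
  fderivWithin ℝ W S p (0, 1)

/-- Induced metric `g_{ij} = ∂_{θ_i} X · ∂_{θ_j} X` of a parametrized moving surface. -/
noncomputable def metricMat {n : ℕ} (S : Set ((Fin n → ℝ) × ℝ))
    (X : (Fin n → ℝ) × ℝ → Fin (n + 1) → ℝ) (p : (Fin n → ℝ) × ℝ) :
    Matrix (Fin n) (Fin n) ℝ :=
  Matrix.of fun i j => ∑ l, dtheta S (fun q => X q l) i p * dtheta S (fun q => X q l) j p

/-- `l`-th ambient component of the tangential gradient: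
`D_l W = Σ_{i,j} g^{ij} (∂_{θ_j} W)(∂_{θ_i} X^l)`. -/
noncomputable def tgrad {n : ℕ} (S : Set ((Fin n → ℝ) × ℝ))
    (X : (Fin n → ℝ) × ℝ → Fin (n + 1) → ℝ) (W : (Fin n → ℝ) × ℝ → ℝ)
    (l : Fin (n + 1)) (p : (Fin n → ℝ) × ℝ) : ℝ :=
  ∑ i, ∑ j, (metricMat S X p)⁻¹ i j * dtheta S W j p * dtheta S (fun q => X q l) i p

/-- Tangential projection `P_{sl} = Σ_{i,j} g^{ij} (∂_{θ_i} X^s)(∂_{θ_j} X^l)`. -/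
noncomputable def tproj {n : ℕ} (S : Set ((Fin n → ℝ) × ℝ))
    (X : (Fin n → ℝ) × ℝ → Fin (n + 1) → ℝ) (s l : Fin (n + 1)) (p : (Fin n → ℝ) × ℝ) : ℝ :=
  ∑ i, ∑ j, (metricMat S X p)⁻¹ i j * dtheta S (fun q => X q s) i p * dtheta S (fun q => X q l) j p

section Helpers
variable {n : ℕ} {S : Set ((Fin n → ℝ) × ℝ)} {p : (Fin n → ℝ) × ℝ}

lemma dtime_sum {ι : Type*} (hSu : UniqueDiffWithinAt ℝ S p) (s : Finset ι)
    (f : ι → (Fin n → ℝ) × ℝ → ℝ)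
    (hf : ∀ i ∈ s, DifferentiableWithinAt ℝ (f i) S p) :
    dtime S (fun q => ∑ i ∈ s, f i q) p = ∑ i ∈ s, dtime S (f i) p := by
  unfold dtime
  rw [fderivWithin_fun_sum hSu hf]
  simp

lemma dtime_mul (hSu : UniqueDiffWithinAt ℝ S p)
    {f g : (Fin n → ℝ) × ℝ → ℝ}
    (hf : DifferentiableWithinAt ℝ f S p) (hg : DifferentiableWithinAt ℝ g S p) :
    dtime S (fun q => f q * g q) p = dtime S f p * g p + f p * dtime S g p := by
  unfold dtime
  rw [fderivWithin_fun_mul hSu hf hg]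
  simp only [ContinuousLinearMap.add_apply, ContinuousLinearMap.smul_apply, smul_eq_mul]
  ring

-- C^1 regularity of dtheta/dtime
lemma contDiffOn_dtheta {f : (Fin n → ℝ) × ℝ → ℝ} (hSu : UniqueDiffOn ℝ S)
    (hf : ContDiffOn ℝ 2 f S) (i : Fin n) :
    ContDiffOn ℝ 1 (fun q => dtheta S f i q) S := by
  have h := hf.fderivWithin (m := 1) hSu (by norm_num)
  exact h.clm_apply contDiffOn_const

lemma contDiffOn_dtime {f : (Fin n → ℝ) × ℝ → ℝ} (hSu : UniqueDiffOn ℝ S)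
    (hf : ContDiffOn ℝ 2 f S) :
    ContDiffOn ℝ 1 (fun q => dtime S f q) S := by
  have h := hf.fderivWithin (m := 1) hSu (by norm_num)
  exact h.clm_apply contDiffOn_const

lemma diffWithin_dtheta {f : (Fin n → ℝ) × ℝ → ℝ} (hSu : UniqueDiffOn ℝ S) (hp : p ∈ S)
    (hf : ContDiffOn ℝ 2 f S) (i : Fin n) :
    DifferentiableWithinAt ℝ (fun q => dtheta S f i q) S p :=
  ((contDiffOn_dtheta hSu hf i) p hp).differentiableWithinAt (by norm_num)

-- commuting derivatives
lemma dtime_dtheta_comm {f : (Fin n → ℝ) × ℝ → ℝ} (hSu : UniqueDiffOn ℝ S) (hp : p ∈ S)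
    (hp' : p ∈ closure (interior S)) (hf : ContDiffOn ℝ 2 f S) (i : Fin n) :
    dtime S (fun q => dtheta S f i q) p = dtheta S (fun q => dtime S f q) i p := by
  have hsymm : IsSymmSndFDerivWithinAt ℝ f S p :=
    (hf p hp).isSymmSndFDerivWithinAt (by simp) hSu hp' hp
  have hdf : DifferentiableWithinAt ℝ (fderivWithin ℝ f S) S p :=
    ((hf.fderivWithin (m := 1) hSu (by norm_num)) p hp).differentiableWithinAt one_ne_zero
  have key : ∀ v : (Fin n → ℝ) × ℝ,
      fderivWithin ℝ (fun q => fderivWithin ℝ f S q v) S p =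
        (fderivWithin ℝ (fderivWithin ℝ f S) S p).flip v := by
    intro v
    have h2 := fderivWithin_clm_apply (hSu p hp) hdf
      (differentiableWithinAt_const v)
    rw [fderivWithin_const_apply v] at h2
    simp only [ContinuousLinearMap.comp_zero, zero_add] at h2
    exact h2
  show fderivWithin ℝ (fun q => fderivWithin ℝ f S q (Pi.single i 1, 0)) S p (0,1)
      = fderivWithin ℝ (fun q => fderivWithin ℝ f S q (0,1)) S p (Pi.single i 1, 0)
  rw [key, key]
  simp only [ContinuousLinearMap.flip_apply]
  exact hsymm _ _

end Helpers


section MoreHelpers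
variable {n : ℕ} {S : Set ((Fin n → ℝ) × ℝ)} {p : (Fin n → ℝ) × ℝ}

lemma diffWithin_prod {ι : Type*} (t : Finset ι) (f : ι → (Fin n → ℝ) × ℝ → ℝ)
    (hf : ∀ i ∈ t, DifferentiableWithinAt ℝ (f i) S p) :
    DifferentiableWithinAt ℝ (fun q => ∏ i ∈ t, f i q) S p := by
  classical
  induction t using Finset.induction_on with
  | empty => simpa using differentiableWithinAt_const (1 : ℝ)
  | insert a t' hnotmem ih =>
    simp only [Finset.prod_insert hnotmem]
    exact (hf a (Finset.mem_insert_self a t')).mul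
      (ih fun i hi => hf i (Finset.mem_insert_of_mem hi))

lemma diffWithin_det {m : ℕ} (M : (Fin n → ℝ) × ℝ → Matrix (Fin m) (Fin m) ℝ)
    (hM : ∀ a b, DifferentiableWithinAt ℝ (fun q => M q a b) S p) :
    DifferentiableWithinAt ℝ (fun q => (M q).det) S p := by
  have h0 : (fun q => (M q).det)
      = fun q => ∑ σ : Equiv.Perm (Fin m),
          ((Equiv.Perm.sign σ : ℤ) : ℝ) * ∏ i, M q (σ i) i := by
    funext q; rw [Matrix.det_apply']
  rw [h0]
  exact DifferentiableWithinAt.fun_sum fun σ _ =>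
    (differentiableWithinAt_const _).mul (diffWithin_prod _ _ fun i _ => hM (σ i) i)

end MoreHelpers

lemma key_alg {n : ℕ} (G : Matrix (Fin n) (Fin n) ℝ)
    (Em vm : Matrix (Fin n) (Fin (n + 1)) ℝ) (u w : Fin n → ℝ) (l : Fin (n + 1))
    (hG1 : G * (Em * Emᵀ) = 1) (hGT : Gᵀ = G) :
    ∑ i, ∑ j, (((-(G * (vm * Emᵀ + Em * vmᵀ) * G)) i j * u j + G i j * w j) * Em i l
        + G i j * u j * vm i l)
      = (∑ i, ∑ j, G i j * w j * Em i l)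
        - ∑ r, ((∑ i, ∑ j, G i j * vm j r * Em i l)
            + (∑ s, (∑ i, ∑ j, G i j * Em i s * Em j l) * (∑ i, ∑ j, G i j * vm j s * Em i r))
            - (∑ i, ∑ j, G i j * vm j l * Em i r)) * (∑ i, ∑ j, G i j * u j * Em i r) := by
  have CV1 : ∀ (M : Matrix (Fin n) (Fin n) ℝ) (x : Fin n → ℝ) (a : Fin (n + 1)),
      ∑ i, ∑ j, M i j * x j * Em i a = ((Emᵀ * M) *ᵥ x) a := by
    intro M x a
    simp only [Matrix.mulVec, dotProduct, Matrix.mul_apply, Matrix.transpose_apply,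
      Finset.sum_mul]
    rw [Finset.sum_comm]
    exact Finset.sum_congr rfl fun i _ => Finset.sum_congr rfl fun j _ => by ring
  have CV2 : ∀ (a b : Fin (n + 1)),
      ∑ i, ∑ j, G i j * vm j b * Em i a = (Emᵀ * G * vm) a b := by
    intro a b
    simp only [Matrix.mul_apply, Matrix.transpose_apply, Finset.sum_mul]
    rw [Finset.sum_comm]
    exact Finset.sum_congr rfl fun i _ => Finset.sum_congr rfl fun j _ => by ring
  have CV3 : ∀ s : Fin (n + 1),
      ∑ i, ∑ j, G i j * Em i s * Em j l = (Emᵀ * G * Em) s l := by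
    intro s
    simp only [Matrix.mul_apply, Matrix.transpose_apply, Finset.sum_mul]
    rw [Finset.sum_comm]
    exact Finset.sum_congr rfl fun i _ => Finset.sum_congr rfl fun j _ => by ring
  have CV4 : ∀ a : Fin (n + 1),
      ∑ i, ∑ j, G i j * u j * vm i a = ((vmᵀ * G) *ᵥ u) a := by
    intro a
    simp only [Matrix.mulVec, dotProduct, Matrix.mul_apply, Matrix.transpose_apply,
      Finset.sum_mul]
    rw [Finset.sum_comm]
    exact Finset.sum_congr rfl fun i _ => Finset.sum_congr rfl fun j _ => by ring
  -- split the left-hand side into three double sums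
  have hsplit : ∑ i, ∑ j, (((-(G * (vm * Emᵀ + Em * vmᵀ) * G)) i j * u j + G i j * w j) * Em i l
        + G i j * u j * vm i l)
      = (∑ i, ∑ j, (-(G * (vm * Emᵀ + Em * vmᵀ) * G)) i j * u j * Em i l)
        + (∑ i, ∑ j, G i j * w j * Em i l)
        + (∑ i, ∑ j, G i j * u j * vm i l) := by
    rw [← Finset.sum_add_distrib, ← Finset.sum_add_distrib]
    exact Finset.sum_congr rfl fun i _ => by
      rw [← Finset.sum_add_distrib, ← Finset.sum_add_distrib]
      exact Finset.sum_congr rfl fun j _ => by ring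
  rw [hsplit, CV4]
  simp only [CV2, CV3]
  simp only [CV1]
  have hNT : (Emᵀ * G * vm)ᵀ = vmᵀ * (G * Em) := by
    rw [Matrix.transpose_mul, Matrix.transpose_mul, Matrix.transpose_transpose, hGT]
  have hPT : (Emᵀ * G * Em)ᵀ = Emᵀ * (G * Em) := by
    rw [Matrix.transpose_mul, Matrix.transpose_mul, Matrix.transpose_transpose, hGT]
  have hy : ∀ s, ∑ r, (Emᵀ * G * vm) r s * ((Emᵀ * G) *ᵥ u) r = ((vmᵀ * G) *ᵥ u) s := by
    intro s
    have h1 : ∑ r, (Emᵀ * G * vm) r s * ((Emᵀ * G) *ᵥ u) r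
        = ((Emᵀ * G * vm)ᵀ *ᵥ ((Emᵀ * G) *ᵥ u)) s := by
      simp only [Matrix.mulVec, dotProduct, Matrix.transpose_apply]
    rw [h1, hNT, Matrix.mulVec_mulVec]
    have hvg : vmᵀ * (G * Em) * (Emᵀ * G) = vmᵀ * G := by
      calc vmᵀ * (G * Em) * (Emᵀ * G) = vmᵀ * (G * (Em * Emᵀ) * G) := by
            simp only [Matrix.mul_assoc]
        _ = vmᵀ * G := by rw [hG1, Matrix.one_mul]
    rw [hvg]
  have hsum : ∑ r, ((Emᵀ * G * vm) l r
        + (∑ s, (Emᵀ * G * Em) s l * (Emᵀ * G * vm) r s)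
        - (Emᵀ * G * vm) r l) * ((Emᵀ * G) *ᵥ u) r
      = (((Emᵀ * G * vm) * (Emᵀ * G)) *ᵥ u) l
        + ((Emᵀ * (G * Em) * (vmᵀ * G)) *ᵥ u) l
        - ((vmᵀ * G) *ᵥ u) l := by
    have step1 : ∀ r, ((Emᵀ * G * vm) l r
          + (∑ s, (Emᵀ * G * Em) s l * (Emᵀ * G * vm) r s)
          - (Emᵀ * G * vm) r l) * ((Emᵀ * G) *ᵥ u) r
        = (Emᵀ * G * vm) l r * ((Emᵀ * G) *ᵥ u) r
          + (∑ s, (Emᵀ * G * Em) s l * ((Emᵀ * G * vm) r s * ((Emᵀ * G) *ᵥ u) r))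
          - (Emᵀ * G * vm) r l * ((Emᵀ * G) *ᵥ u) r := by
      intro r
      rw [sub_mul, add_mul, Finset.sum_mul]
      simp_rw [mul_assoc]
    calc ∑ r, ((Emᵀ * G * vm) l r
          + (∑ s, (Emᵀ * G * Em) s l * (Emᵀ * G * vm) r s)
          - (Emᵀ * G * vm) r l) * ((Emᵀ * G) *ᵥ u) r
        = (∑ r, (Emᵀ * G * vm) l r * ((Emᵀ * G) *ᵥ u) r)
          + (∑ r, ∑ s, (Emᵀ * G * Em) s l * ((Emᵀ * G * vm) r s * ((Emᵀ * G) *ᵥ u) r))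
          - ∑ r, (Emᵀ * G * vm) r l * ((Emᵀ * G) *ᵥ u) r := by
          rw [← Finset.sum_add_distrib, ← Finset.sum_sub_distrib]
          exact Finset.sum_congr rfl fun r _ => step1 r
      _ = (((Emᵀ * G * vm) * (Emᵀ * G)) *ᵥ u) l
          + ((Emᵀ * (G * Em) * (vmᵀ * G)) *ᵥ u) l
          - ((vmᵀ * G) *ᵥ u) l := by
          congr 1
          · congr 1
            · conv_rhs => rw [← Matrix.mulVec_mulVec]
              simp only [Matrix.mulVec, dotProduct]
            · rw [Finset.sum_comm]
              have : ∀ s : Fin (n+1), ∑ r, (Emᵀ * G * Em) s l *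
                  ((Emᵀ * G * vm) r s * ((Emᵀ * G) *ᵥ u) r)
                  = (Emᵀ * G * Em) s l * ((vmᵀ * G) *ᵥ u) s := by
                intro s
                rw [← Finset.mul_sum, hy s]
              rw [Finset.sum_congr rfl fun s _ => this s]
              have h2 : ∑ s, (Emᵀ * G * Em) s l * ((vmᵀ * G) *ᵥ u) s
                  = ((Emᵀ * G * Em)ᵀ *ᵥ ((vmᵀ * G) *ᵥ u)) l := by
                simp only [Matrix.mulVec, dotProduct, Matrix.transpose_apply]
              rw [h2, hPT, Matrix.mulVec_mulVec]
          · exact hy l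
  rw [hsum]
  have main : (Emᵀ * -(G * (vm * Emᵀ + Em * vmᵀ) * G))
      + ((Emᵀ * G * vm) * (Emᵀ * G) + Emᵀ * (G * Em) * (vmᵀ * G)) = 0 := by
    simp only [Matrix.mul_neg, Matrix.mul_add, Matrix.add_mul, Matrix.mul_assoc, neg_add]
    abel
  have hmv := congrFun (congrArg (fun M => M *ᵥ u) main) l
  simp only [Matrix.add_mulVec, Matrix.zero_mulVec, Pi.add_apply, Pi.zero_apply] at hmv
  linarith

/-- Commutation of the material time derivative with the tangential gradient on a moving
parametrized hypersurface:
`∂_t (D_l U) = D_l (∂_t U) − Σ_r A_{lr} D_r U` with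
`A_{lr} = D_l V^r + Σ_s P_{sl} D_r V^s − D_r V^l`, where `V = ∂_t X`. -/
theorem material_derivative_commutes_with_tangential_gradient {n : ℕ}
    (O : Set (Fin n → ℝ)) (hO : IsOpen O) (T : ℝ) (hT : 0 < T)
    (X : (Fin n → ℝ) × ℝ → Fin (n + 1) → ℝ) (U : (Fin n → ℝ) × ℝ → ℝ)
    (S : Set ((Fin n → ℝ) × ℝ)) (hS : S = O ×ˢ Set.Icc 0 T)
    (hX : ContDiffOn ℝ 2 X S) (hU : ContDiffOn ℝ 2 U S)
    (hinv : ∀ p ∈ S, IsUnit (metricMat S X p)) :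
    ∀ p ∈ S, ∀ l : Fin (n + 1),
      dtime S (fun q => tgrad S X U l q) p =
        tgrad S X (fun q => dtime S U q) l p
          - ∑ r,
              (tgrad S X (fun q => dtime S (fun q' => X q' r) q) l p
                + (∑ s, tproj S X s l p * tgrad S X (fun q => dtime S (fun q' => X q' s) q) r p)
                - tgrad S X (fun q => dtime S (fun q' => X q' l) q) r p)
              * tgrad S X U r p := by
  intro p hp l
  classical
  have hSu : UniqueDiffOn ℝ S := by
    rw [hS]; exact hO.uniqueDiffOn.prod (uniqueDiffOn_Icc hT)
  have hpu : UniqueDiffWithinAt ℝ S p := hSu p hp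
  have hpc : p ∈ closure (interior S) := by
    have h1 : interior S = O ×ˢ Set.Ioo 0 T := by
      rw [hS, interior_prod_eq, hO.interior_eq, interior_Icc]
    rw [h1, closure_prod_eq, closure_Ioo hT.ne]
    rw [hS] at hp
    exact ⟨subset_closure hp.1, hp.2⟩
  have hXc : ∀ s : Fin (n + 1), ContDiffOn ℝ 2 (fun q => X q s) S :=
    fun s => contDiffOn_pi.mp hX s
  -- basic differentiability
  have hE : ∀ (s : Fin (n + 1)) (i : Fin n),
      DifferentiableWithinAt ℝ (fun q => dtheta S (fun q' => X q' s) i q) S p :=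
    fun s i => diffWithin_dtheta hSu hp (hXc s) i
  have hUd : ∀ j : Fin n, DifferentiableWithinAt ℝ (fun q => dtheta S U j q) S p :=
    fun j => diffWithin_dtheta hSu hp hU j
  have hgfe : ∀ a b : Fin n, (fun q => metricMat S X q a b)
      = fun q => ∑ s, dtheta S (fun q' => X q' s) a q * dtheta S (fun q' => X q' s) b q :=
    fun a b => rfl
  have hgf : ∀ a b : Fin n, DifferentiableWithinAt ℝ (fun q => metricMat S X q a b) S p := by
    intro a b
    rw [hgfe a b]
    exact DifferentiableWithinAt.fun_sum fun s _ => (hE s a).fun_mul (hE s b)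
  have hdet : DifferentiableWithinAt ℝ (fun q => (metricMat S X q).det) S p :=
    diffWithin_det _ hgf
  have hdetu : IsUnit (metricMat S X p).det :=
    (Matrix.isUnit_iff_isUnit_det _).mp (hinv p hp)
  have hdetne : (metricMat S X p).det ≠ 0 := hdetu.ne_zero
  have hadj : ∀ a b : Fin n,
      DifferentiableWithinAt ℝ (fun q => (metricMat S X q).adjugate a b) S p := by
    intro a b
    have h0 : (fun q => (metricMat S X q).adjugate a b)
        = fun q => ((metricMat S X q).updateRow b (Pi.single a 1)).det := by
      funext q; rw [Matrix.adjugate_apply]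
    rw [h0]
    apply diffWithin_det
    intro c d
    have h1 : (fun q => (metricMat S X q).updateRow b (Pi.single a 1) c d)
        = fun q => if c = b then (Pi.single a 1 : Fin n → ℝ) d else metricMat S X q c d := by
      funext q; rw [Matrix.updateRow_apply]
    rw [h1]
    by_cases hcb : c = b
    · simp only [hcb, if_pos rfl]; exact differentiableWithinAt_const _
    · simp only [if_neg hcb]; exact hgf c d
  have hGdiff : ∀ a b : Fin n,
      DifferentiableWithinAt ℝ (fun q => (metricMat S X q)⁻¹ a b) S p := by
    intro a b
    have h0 : (fun q => (metricMat S X q)⁻¹ a b)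
        = fun q => ((metricMat S X q).det)⁻¹ * (metricMat S X q).adjugate a b := by
      funext q; rw [Matrix.inv_def, Matrix.smul_apply, Ring.inverse_eq_inv, smul_eq_mul]
    rw [h0]
    exact (hdet.inv hdetne).mul (hadj a b)
  -- point matrices
  set Em : Matrix (Fin n) (Fin (n + 1)) ℝ :=
    Matrix.of fun i s => dtheta S (fun q => X q s) i p with hEm
  set vm : Matrix (Fin n) (Fin (n + 1)) ℝ :=
    Matrix.of fun i s => dtheta S (fun q => dtime S (fun q' => X q' s) q) i p with hvm
  have hgmEm : metricMat S X p = Em * Emᵀ := by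
    ext a b
    simp only [metricMat, Matrix.mul_apply, Matrix.of_apply, Matrix.transpose_apply, hEm]
  have hG1 : (metricMat S X p)⁻¹ * (Em * Emᵀ) = 1 := by
    rw [← hgmEm]; exact Matrix.nonsing_inv_mul _ hdetu
  have hgsym : (metricMat S X p)ᵀ = metricMat S X p := by
    ext a b
    simp only [Matrix.transpose_apply, metricMat, Matrix.of_apply]
    exact Finset.sum_congr rfl fun s _ => mul_comm _ _
  have hGT : ((metricMat S X p)⁻¹)ᵀ = (metricMat S X p)⁻¹ := by
    rw [Matrix.transpose_nonsing_inv, hgsym]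
  -- commutation of derivatives
  have hw : ∀ j : Fin n, dtime S (fun q => dtheta S U j q) p
      = dtheta S (fun q => dtime S U q) j p :=
    fun j => dtime_dtheta_comm hSu hp hpc hU j
  have hv : ∀ (s : Fin (n + 1)) (i : Fin n),
      dtime S (fun q => dtheta S (fun q' => X q' s) i q) p = vm i s :=
    fun s i => dtime_dtheta_comm hSu hp hpc (hXc s) i
  -- time derivative of the metric entries
  have hdtg : ∀ a b : Fin n, dtime S (fun q => metricMat S X q a b) p
      = (vm * Emᵀ + Em * vmᵀ) a b := by
    intro a b
    rw [hgfe a b, dtime_sum hpu Finset.univ _ (fun s _ => (hE s a).fun_mul (hE s b))]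
    have h1 : ∀ s : Fin (n + 1),
        dtime S (fun q => dtheta S (fun q' => X q' s) a q * dtheta S (fun q' => X q' s) b q) p
        = vm a s * Em b s + Em a s * vm b s := by
      intro s
      rw [dtime_mul hpu (hE s a) (hE s b), hv s a, hv s b]
      rfl
    rw [Finset.sum_congr rfl fun s _ => h1 s]
    simp only [Matrix.add_apply, Matrix.mul_apply, Matrix.transpose_apply,
      Finset.sum_add_distrib]
  -- derivative of the inverse metric entries
  have hdGform : ∀ a b : Fin n, dtime S (fun q => (metricMat S X q)⁻¹ a b) p
      = (-((metricMat S X p)⁻¹ * (vm * Emᵀ + Em * vmᵀ) * (metricMat S X p)⁻¹)) a b := by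
    have hzero : ∀ a b : Fin n,
        ∑ k, (dtime S (fun q => (metricMat S X q)⁻¹ a k) p * metricMat S X p k b
          + (metricMat S X p)⁻¹ a k * dtime S (fun q => metricMat S X q k b) p) = 0 := by
      intro a b
      have hid : Set.EqOn (fun q => ∑ k, (metricMat S X q)⁻¹ a k * metricMat S X q k b)
          (fun _ => (1 : Matrix (Fin n) (Fin n) ℝ) a b) S := by
        intro q hq
        have h1 : (metricMat S X q)⁻¹ * metricMat S X q = 1 :=
          Matrix.nonsing_inv_mul _ ((Matrix.isUnit_iff_isUnit_det _).mp (hinv q hq))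
        show ∑ k, (metricMat S X q)⁻¹ a k * metricMat S X q k b = _
        rw [← Matrix.mul_apply, h1]
      have hconst : dtime S (fun q => ∑ k, (metricMat S X q)⁻¹ a k * metricMat S X q k b) p
          = 0 := by
        unfold dtime
        rw [fderivWithin_congr hid (hid hp), fderivWithin_const_apply _]
        simp
      rw [← hconst, dtime_sum hpu Finset.univ _ (fun k _ => (hGdiff a k).fun_mul (hgf k b))]
      exact Finset.sum_congr rfl fun k _ => (dtime_mul hpu (hGdiff a k) (hgf k b)).symm
    set dG : Matrix (Fin n) (Fin n) ℝ :=
      Matrix.of fun a b => dtime S (fun q => (metricMat S X q)⁻¹ a b) p with hdG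
    have hmat : dG * metricMat S X p
        + (metricMat S X p)⁻¹ * (vm * Emᵀ + Em * vmᵀ) = 0 := by
      ext a b
      have h2 : ∀ k, (metricMat S X p)⁻¹ a k * (vm * Emᵀ + Em * vmᵀ) k b
          = (metricMat S X p)⁻¹ a k * dtime S (fun q => metricMat S X q k b) p := by
        intro k; rw [hdtg k b]
      rw [Matrix.add_apply, Matrix.mul_apply, Matrix.mul_apply,
        Finset.sum_congr rfl fun k _ => h2 k, ← Finset.sum_add_distrib, Matrix.zero_apply]
      exact hzero a b
    have h3 : dG * metricMat S X p
        = -((metricMat S X p)⁻¹ * (vm * Emᵀ + Em * vmᵀ)) :=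
      eq_neg_of_add_eq_zero_left hmat
    have h4 : dG = -((metricMat S X p)⁻¹ * (vm * Emᵀ + Em * vmᵀ) * (metricMat S X p)⁻¹) := by
      calc dG = dG * (metricMat S X p * (metricMat S X p)⁻¹) := by
            rw [Matrix.mul_nonsing_inv _ hdetu, Matrix.mul_one]
        _ = dG * metricMat S X p * (metricMat S X p)⁻¹ := by rw [Matrix.mul_assoc]
        _ = -((metricMat S X p)⁻¹ * (vm * Emᵀ + Em * vmᵀ)) * (metricMat S X p)⁻¹ := by
            rw [h3]
        _ = -((metricMat S X p)⁻¹ * (vm * Emᵀ + Em * vmᵀ) * (metricMat S X p)⁻¹) := by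
            rw [Matrix.neg_mul]
    intro a b
    calc dtime S (fun q => (metricMat S X q)⁻¹ a b) p = dG a b := rfl
      _ = _ := by rw [h4]
  -- compute the time derivative of the tangential gradient
  have hprod_diff : ∀ (i j : Fin n), DifferentiableWithinAt ℝ
      (fun q => (metricMat S X q)⁻¹ i j * dtheta S U j q
        * dtheta S (fun q' => X q' l) i q) S p :=
    fun i j => ((hGdiff i j).mul (hUd j)).mul (hE l i)
  have hLHS : dtime S (fun q => tgrad S X U l q) p
      = ∑ i, ∑ j,
          ((dtime S (fun q => (metricMat S X q)⁻¹ i j) p * dtheta S U j p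
              + (metricMat S X p)⁻¹ i j * dtheta S (fun q => dtime S U q) j p) * Em i l
            + (metricMat S X p)⁻¹ i j * dtheta S U j p * vm i l) := by
    have h0 : (fun q => tgrad S X U l q)
        = fun q => ∑ i, ∑ j, (metricMat S X q)⁻¹ i j * dtheta S U j q
            * dtheta S (fun q' => X q' l) i q := rfl
    rw [h0, dtime_sum hpu Finset.univ _
      (fun i _ => DifferentiableWithinAt.fun_sum fun j _ => hprod_diff i j)]
    have h1 : ∀ i : Fin n,
        dtime S (fun q => ∑ j, (metricMat S X q)⁻¹ i j * dtheta S U j q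
            * dtheta S (fun q' => X q' l) i q) p
        = ∑ j, ((dtime S (fun q => (metricMat S X q)⁻¹ i j) p * dtheta S U j p
              + (metricMat S X p)⁻¹ i j * dtheta S (fun q => dtime S U q) j p) * Em i l
            + (metricMat S X p)⁻¹ i j * dtheta S U j p * vm i l) := by
      intro i
      rw [dtime_sum hpu Finset.univ _ (fun j _ => hprod_diff i j)]
      refine Finset.sum_congr rfl fun j _ => ?_
      rw [dtime_mul hpu ((hGdiff i j).fun_mul (hUd j)) (hE l i),
        dtime_mul hpu (hGdiff i j) (hUd j), hw j, hv l i]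
      rfl
    exact Finset.sum_congr rfl fun i _ => h1 i
  rw [hLHS]
  simp only [hdGform]
  have hkey := key_alg ((metricMat S X p)⁻¹) Em vm
    (fun j => dtheta S U j p) (fun j => dtheta S (fun q => dtime S U q) j p) l hG1 hGT
  unfold tgrad tproj
  simp only [hEm, hvm, Matrix.of_apply] at hkey
  exact hkey
end

section
/- Let T > 0, let A : [0,T] → Matrix (n+1) (n+1) ℝ be continuous, and let B₀ be a symmetric (n+1)×(n+1) real matrix that is positive definite, i.e. B₀ ξ · ξ ≥ d₀ |ξ|² for all ξ ∈ ℝ^{n+1} with some d₀ > 0. Then there exists λ₀ ≥ 0 such that for every λ ≥ λ₀ the solution B : [0,T] → Matrix (n+1) (n+1) ℝ of B'(t) = B(t) A(t) + A(t)ᵀ B(t) + λ B(t), B(0) = B₀, is symmetric and positive definite for every t ∈ [0,T] (i.e. B(t) ξ · ξ > 0 for every ξ ≠ 0). -/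
open Matrix
open scoped BigOperators

section Aux

variable {m : ℕ}

/-- The determinant as a continuous multilinear map in the rows. -/
noncomputable def detCML (m : ℕ) :
    ContinuousMultilinearMap ℝ (fun _ : Fin m => (Fin m → ℝ)) ℝ :=
  (Matrix.detRowAlternating : (Fin m → ℝ) [⋀^Fin m]→ₗ[ℝ] ℝ).toMultilinearMap.mkContinuous
    (Fintype.card (Equiv.Perm (Fin m))) (by
      intro M
      have hM : (Matrix.detRowAlternating : (Fin m → ℝ) [⋀^Fin m]→ₗ[ℝ] ℝ).toMultilinearMap M
          = Matrix.det (Matrix.of M) := rfl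
      rw [hM, Matrix.det_apply]
      calc ‖∑ σ : Equiv.Perm (Fin m), Equiv.Perm.sign σ • ∏ i, (Matrix.of M) (σ i) i‖
          ≤ ∑ σ : Equiv.Perm (Fin m), ‖Equiv.Perm.sign σ • ∏ i, (Matrix.of M) (σ i) i‖ :=
            norm_sum_le _ _
        _ ≤ ∑ σ : Equiv.Perm (Fin m), ∏ i, ‖M i‖ := by
            refine Finset.sum_le_sum fun σ _ => ?_
            have h1 : ‖Equiv.Perm.sign σ • ∏ i, (Matrix.of M) (σ i) i‖
                = ‖∏ i, (Matrix.of M) (σ i) i‖ := by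
              rcases Int.units_eq_one_or (Equiv.Perm.sign σ) with h | h <;> rw [h] <;> simp
            rw [h1]
            calc ‖∏ i, (Matrix.of M) (σ i) i‖ ≤ ∏ i, ‖(Matrix.of M) (σ i) i‖ := by
                  simpa using norm_prod_le Finset.univ (fun i => (Matrix.of M) (σ i) i)
              _ ≤ ∏ i, ‖M (σ i)‖ := by
                  refine Finset.prod_le_prod (fun i _ => norm_nonneg _) fun i _ => ?_
                  exact norm_le_pi_norm (M (σ i)) i
              _ = ∏ i, ‖M i‖ := Equiv.prod_comp σ (fun i => ‖M i‖)
        _ = (Fintype.card (Equiv.Perm (Fin m))) * ∏ i, ‖M i‖ := by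
            rw [Finset.sum_const, Finset.card_univ, nsmul_eq_mul]
        _ ≤ _ := le_refl _)

lemma det_updateRow_eq (M : Matrix (Fin m) (Fin m) ℝ) (i : Fin m) (x : Fin m → ℝ) :
    (M.updateRow i x).det = ∑ j, x j * M.adjugate j i := by
  have h1 : (M.updateRow i x).det = (Mᵀ.updateCol i x).det := by
    rw [Matrix.updateCol_transpose, Matrix.det_transpose]
  rw [h1, ← Matrix.cramer_apply, Matrix.cramer_eq_adjugate_mulVec, ← Matrix.adjugate_transpose]
  simp [Matrix.mulVec, dotProduct, Matrix.transpose_apply, mul_comm]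

/-- Derivative of the determinant along a matrix path. -/
theorem hasDerivWithinAt_det {B : ℝ → Matrix (Fin m) (Fin m) ℝ}
    {B' : Matrix (Fin m) (Fin m) ℝ} {s : Set ℝ} {t : ℝ}
    (hB : ∀ i j, HasDerivWithinAt (fun u => B u i j) (B' i j) s t) :
    HasDerivWithinAt (fun u => (B u).det)
      (Matrix.trace (B' * (B t).adjugate)) s t := by
  have hrow : ∀ i, HasFDerivWithinAt (fun u => B u i)
      ((1 : ℝ →L[ℝ] ℝ).smulRight (B' i)) s t := by
    intro i
    exact (hasDerivWithinAt_pi.2 fun j => hB i j).hasFDerivWithinAt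
  have h := HasFDerivWithinAt.multilinear_comp (detCML m) hrow
  have h2 : HasDerivWithinAt (fun u => (B u).det)
      (∑ i, (detCML m) (Function.update (fun j => B t j) i (B' i))) s t := by
    have h3 := h.hasDerivWithinAt
    simp [ContinuousMultilinearMap.linearDeriv_apply] at h3
    exact h3
  have key : (∑ i, (detCML m) (Function.update (fun j => B t j) i (B' i)))
      = Matrix.trace (B' * (B t).adjugate) := by
    have upd : ∀ i, (detCML m) (Function.update (fun j => B t j) i (B' i))
        = ((B t).updateRow i (B' i)).det := fun i => rfl
    simp only [upd, det_updateRow_eq]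
    simp [Matrix.trace, Matrix.diag, Matrix.mul_apply]
  rw [key] at h2
  exact h2

lemma trace_ode_adjugate (M A : Matrix (Fin m) (Fin m) ℝ) (lam : ℝ) :
    Matrix.trace ((M * A + Aᵀ * M + lam • M) * M.adjugate)
      = (2 * Matrix.trace A + m * lam) * M.det := by
  have hMadj : M * M.adjugate = M.det • 1 := Matrix.mul_adjugate M
  have hadjM : M.adjugate * M = M.det • 1 := Matrix.adjugate_mul M
  have h1 : Matrix.trace (M * A * M.adjugate) = M.det * Matrix.trace A := by
    rw [Matrix.trace_mul_cycle, hadjM, Matrix.smul_mul, Matrix.one_mul,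
      Matrix.trace_smul, smul_eq_mul]
  have h2 : Matrix.trace (Aᵀ * M * M.adjugate) = M.det * Matrix.trace A := by
    rw [Matrix.mul_assoc, hMadj, Matrix.mul_smul, Matrix.mul_one, Matrix.trace_smul,
      Matrix.trace_transpose, smul_eq_mul]
  have h3 : Matrix.trace ((lam • M) * M.adjugate) = lam * (M.det * m) := by
    rw [Matrix.smul_mul, hMadj, Matrix.trace_smul, Matrix.trace_smul, Matrix.trace_one,
      smul_eq_mul, smul_eq_mul, Fintype.card_fin]
  rw [Matrix.add_mul, Matrix.add_mul, Matrix.trace_add, Matrix.trace_add, h1, h2, h3]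
  ring

lemma quadratic_aux {a b : ℝ} (ha : 0 ≤ a) (h : ∀ t : ℝ, 0 ≤ a * t ^ 2 + 2 * t * b) :
    b = 0 := by
  by_contra hb
  have ht := h (-b / (a + 1))
  have ha1 : 0 < a + 1 := by linarith
  have hb2 : 0 < b ^ 2 := by positivity
  have key : a * (-b / (a + 1)) ^ 2 + 2 * (-b / (a + 1)) * b
      = b ^ 2 / (a + 1) * (a / (a + 1) - 2) := by
    field_simp
    ring
  rw [key] at ht
  have hlt : a / (a + 1) - 2 < 0 := by
    have h1 : a / (a + 1) < 1 := by rw [div_lt_one ha1]; linarith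
    linarith
  nlinarith [div_pos hb2 ha1]

lemma mulVec_eq_zero_of_semidef {M : Matrix (Fin m) (Fin m) ℝ} (hsymm : M.IsSymm)
    (hsd : ∀ ξ, 0 ≤ ξ ⬝ᵥ M *ᵥ ξ) {ξ : Fin m → ℝ} (hξ : ξ ⬝ᵥ M *ᵥ ξ = 0) : M *ᵥ ξ = 0 := by
  have hsym : ∀ v w : Fin m → ℝ, v ⬝ᵥ M *ᵥ w = w ⬝ᵥ M *ᵥ v := by
    intro v w
    rw [Matrix.dotProduct_mulVec, ← Matrix.mulVec_transpose, hsymm.eq, dotProduct_comm]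
  have key : ∀ w : Fin m → ℝ, w ⬝ᵥ M *ᵥ ξ = 0 := by
    intro w
    refine quadratic_aux (hsd w) fun t => ?_
    have h := hsd (ξ + t • w)
    have expand : (ξ + t • w) ⬝ᵥ M *ᵥ (ξ + t • w)
        = ξ ⬝ᵥ M *ᵥ ξ + t * (ξ ⬝ᵥ M *ᵥ w) + t * (w ⬝ᵥ M *ᵥ ξ) + t ^ 2 * (w ⬝ᵥ M *ᵥ w) := by
      simp only [Matrix.mulVec_add, Matrix.mulVec_smul, dotProduct_add,
        add_dotProduct, dotProduct_smul, smul_dotProduct, smul_eq_mul]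
      ring
    rw [expand, hξ, hsym ξ w] at h
    linarith [h]
  have h2 := key (M *ᵥ ξ)
  have h3 : ∀ i, (M *ᵥ ξ) i = 0 := by
    intro i
    have hsum : ∑ j, (M *ᵥ ξ) j * (M *ᵥ ξ) j = 0 := h2
    have := Finset.sum_eq_zero_iff_of_nonneg (fun j _ => mul_self_nonneg ((M *ᵥ ξ) j)) |>.1 hsum
      i (Finset.mem_univ i)
    exact mul_self_eq_zero.1 this
  funext i; exact h3 i

lemma exists_coercive {n : ℕ} {M : Matrix (Fin (n+1)) (Fin (n+1)) ℝ}
    (h : ∀ ξ : Fin (n+1) → ℝ, ξ ≠ 0 → 0 < ξ ⬝ᵥ M *ᵥ ξ) :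
    ∃ κ > 0, ∀ ξ : Fin (n+1) → ℝ, κ * ∑ i, ξ i ^ 2 ≤ ξ ⬝ᵥ M *ᵥ ξ := by
  set Q : (Fin (n+1) → ℝ) → ℝ := fun ξ => ξ ⬝ᵥ M *ᵥ ξ with hQ
  have hQcont : Continuous Q := by
    unfold Q
    simp only [dotProduct, Matrix.mulVec]
    fun_prop
  set K : Set (Fin (n+1) → ℝ) := {ξ | ∑ i, ξ i ^ 2 = 1} with hK
  have hKco : IsCompact K := by
    have hclosed : IsClosed K := isClosed_eq (by fun_prop) continuous_const
    have hbdd : Bornology.IsBounded K := by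
      have : K ⊆ Metric.closedBall 0 1 := by
        intro ξ hξ
        rw [Metric.mem_closedBall, dist_zero_right]
        rw [pi_norm_le_iff_of_nonneg (by norm_num)]
        intro i
        have h1 : ξ i ^ 2 ≤ ∑ j, ξ j ^ 2 :=
          Finset.single_le_sum (fun j _ => sq_nonneg (ξ j)) (Finset.mem_univ i)
        rw [hξ] at h1
        rw [Real.norm_eq_abs, abs_le]
        constructor <;> nlinarith
      exact Bornology.IsBounded.subset (Metric.isBounded_closedBall) this
    exact Metric.isCompact_of_isClosed_isBounded hclosed hbdd
  have hKne : K.Nonempty := by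
    refine ⟨Pi.single 0 1, ?_⟩
    simp [hK, Pi.single_apply]
  obtain ⟨ξ₀, hξ₀K, hmin⟩ := hKco.exists_isMinOn hKne hQcont.continuousOn
  have hξ₀ne : ξ₀ ≠ 0 := by
    intro h0
    rw [h0] at hξ₀K
    simp [hK] at hξ₀K
  set κ := Q ξ₀ with hκdef
  have hκpos : 0 < κ := h ξ₀ hξ₀ne
  refine ⟨κ, hκpos, fun ξ => ?_⟩
  rcases eq_or_ne ξ 0 with rfl | hξne
  · simp [Q]
  · have hr2 : 0 < ∑ i, ξ i ^ 2 := by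
      rcases Function.ne_iff.1 hξne with ⟨i, hi⟩
      have : 0 < ξ i ^ 2 := lt_of_le_of_ne (sq_nonneg _) (Ne.symm (pow_ne_zero 2 hi))
      exact lt_of_lt_of_le this (Finset.single_le_sum (fun j _ => sq_nonneg (ξ j))
        (Finset.mem_univ i))
    set r := Real.sqrt (∑ i, ξ i ^ 2) with hrdef
    have hrpos : 0 < r := Real.sqrt_pos.2 hr2
    have hrsq : r ^ 2 = ∑ i, ξ i ^ 2 := Real.sq_sqrt hr2.le
    set η := r⁻¹ • ξ with hη
    have hηK : η ∈ K := by
      simp only [hK, Set.mem_setOf_eq, hη, Pi.smul_apply, smul_eq_mul, mul_pow]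
      rw [← Finset.mul_sum, ← hrsq]
      field_simp
    have hscale : Q ξ = r ^ 2 * Q η := by
      have hxi : ξ = r • η := by rw [hη, smul_smul, mul_inv_cancel₀ hrpos.ne', one_smul]
      rw [hxi]
      show (r • η) ⬝ᵥ M *ᵥ (r • η) = r ^ 2 * (η ⬝ᵥ M *ᵥ η)
      simp only [Matrix.mulVec_smul, smul_dotProduct, dotProduct_smul,
        smul_eq_mul]
      ring
    have : κ ≤ Q η := hmin hηK
    calc κ * ∑ i, ξ i ^ 2 = κ * r ^ 2 := by rw [hrsq]
      _ ≤ Q η * r ^ 2 := by nlinarith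
      _ = Q ξ := by rw [hscale]; ring

lemma semidef_of_close {n : ℕ} {M N : Matrix (Fin (n+1)) (Fin (n+1)) ℝ} {κ : ℝ} (hκ : 0 < κ)
    (hM : ∀ ξ : Fin (n+1) → ℝ, κ * ∑ i, ξ i ^ 2 ≤ ξ ⬝ᵥ M *ᵥ ξ)
    (hMN : ∀ i j, |N i j - M i j| ≤ κ / (n+1)) :
    ∀ ξ : Fin (n+1) → ℝ, 0 ≤ ξ ⬝ᵥ N *ᵥ ξ := by
  intro ξ
  have hdiff : ξ ⬝ᵥ N *ᵥ ξ - ξ ⬝ᵥ M *ᵥ ξ = ∑ i, ∑ j, ξ i * ((N i j - M i j) * ξ j) := by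
    simp only [dotProduct, Matrix.mulVec, ← Finset.sum_sub_distrib, Finset.mul_sum]
    congr 1; funext i; congr 1; funext j; ring
  have habs : |∑ i, ∑ j, ξ i * ((N i j - M i j) * ξ j)| ≤ κ / (n+1) * (∑ i, |ξ i|) ^ 2 := by
    calc |∑ i, ∑ j, ξ i * ((N i j - M i j) * ξ j)|
        ≤ ∑ i, |∑ j, ξ i * ((N i j - M i j) * ξ j)| := Finset.abs_sum_le_sum_abs _ _
      _ ≤ ∑ i, ∑ j, |ξ i| * (κ / (n+1) * |ξ j|) := by
          refine Finset.sum_le_sum fun i _ => ?_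
          calc |∑ j, ξ i * ((N i j - M i j) * ξ j)|
              ≤ ∑ j, |ξ i * ((N i j - M i j) * ξ j)| := Finset.abs_sum_le_sum_abs _ _
            _ ≤ ∑ j, |ξ i| * (κ / (n+1) * |ξ j|) := by
                refine Finset.sum_le_sum fun j _ => ?_
                rw [abs_mul, abs_mul]
                have h1 : |N i j - M i j| * |ξ j| ≤ κ / (n+1) * |ξ j| :=
                  mul_le_mul_of_nonneg_right (hMN i j) (abs_nonneg _)
                exact mul_le_mul_of_nonneg_left h1 (abs_nonneg _)
      _ = κ / (n+1) * (∑ i, |ξ i|) ^ 2 := by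
          rw [sq, Finset.sum_mul_sum, Finset.mul_sum]
          refine Finset.sum_congr rfl fun i _ => ?_
          rw [Finset.mul_sum]
          refine Finset.sum_congr rfl fun j _ => by ring
  have hsq : (∑ i, |ξ i|) ^ 2 ≤ (n+1) * ∑ i, ξ i ^ 2 := by
    have := sq_sum_le_card_mul_sum_sq (s := Finset.univ) (f := fun i : Fin (n+1) => |ξ i|)
    simpa [sq_abs, Finset.card_univ] using this
  have hnpos : (0:ℝ) < n + 1 := by positivity
  have h2 : κ / (n+1) * (∑ i, |ξ i|) ^ 2 ≤ κ * ∑ i, ξ i ^ 2 := by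
    calc κ / (n+1) * (∑ i, |ξ i|) ^ 2 ≤ κ / (n+1) * ((n+1) * ∑ i, ξ i ^ 2) := by
          apply mul_le_mul_of_nonneg_left hsq (by positivity)
      _ = κ * ∑ i, ξ i ^ 2 := by field_simp
  have h3 := hM ξ
  have h4 : ξ ⬝ᵥ N *ᵥ ξ - ξ ⬝ᵥ M *ᵥ ξ ≥ -(κ * ∑ i, ξ i ^ 2) := by
    rw [hdiff]
    have := abs_le.1 habs
    linarith [this.1]
  linarith

end Aux

/-- If `B₀` is symmetric and coercive (`B₀ ξ · ξ ≥ d₀ |ξ|²` with `d₀ > 0`), then there is a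
`λ₀ ≥ 0` such that for every `λ ≥ λ₀` any solution of the linear matrix ODE
`B' = B A + Aᵀ B + λ B`, `B(0) = B₀`, stays symmetric and positive definite on `[0,T]`. -/
theorem matrix_ode_positive_definite {n : ℕ} (T : ℝ) (hT : 0 < T)
    (A : ℝ → Matrix (Fin (n + 1)) (Fin (n + 1)) ℝ)
    (hA : ContinuousOn A (Set.Icc 0 T))
    (B₀ : Matrix (Fin (n + 1)) (Fin (n + 1)) ℝ) (hB₀symm : B₀.IsSymm)
    (d₀ : ℝ) (hd₀ : 0 < d₀)
    (hB₀coercive : ∀ ξ : Fin (n + 1) → ℝ, d₀ * ∑ i, ξ i ^ 2 ≤ ξ ⬝ᵥ B₀.mulVec ξ) :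
    ∃ lam₀ : ℝ, 0 ≤ lam₀ ∧ ∀ lam : ℝ, lam₀ ≤ lam →
      ∀ B : ℝ → Matrix (Fin (n + 1)) (Fin (n + 1)) ℝ,
        B 0 = B₀ →
        (∀ t ∈ Set.Icc 0 T, ∀ i j : Fin (n + 1),
          HasDerivWithinAt (fun s => B s i j)
            ((B t * A t + (A t)ᵀ * B t + lam • B t) i j) (Set.Icc 0 T) t) →
        ∀ t ∈ Set.Icc 0 T,
          (B t).IsSymm ∧ ∀ ξ : Fin (n + 1) → ℝ, ξ ≠ 0 → 0 < ξ ⬝ᵥ (B t).mulVec ξ := by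
  refine ⟨0, le_refl 0, fun lam _ B hB0 hderiv => ?_⟩
  have hT0 : (0:ℝ) ∈ Set.Icc (0:ℝ) T := ⟨le_refl 0, hT.le⟩
  -- continuity of the entries of B
  have hBcont : ∀ i j, ContinuousOn (fun s => B s i j) (Set.Icc 0 T) :=
    fun i j t ht => (hderiv t ht i j).continuousWithinAt
  -- a bound for the entries of A on [0, T]
  have hAc : ContinuousOn (fun t => (fun i j => A t i j : Fin (n+1) → Fin (n+1) → ℝ))
      (Set.Icc 0 T) := by
    refine continuousOn_pi.2 fun i => continuousOn_pi.2 fun j => ?_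
    exact ((continuous_apply j).comp (continuous_apply i)).comp_continuousOn hA
  obtain ⟨a₀, ha₀⟩ := (isCompact_Icc).exists_bound_of_continuousOn hAc
  set a : ℝ := max a₀ 0 with ha_def
  have ha_nn : 0 ≤ a := le_max_right _ _
  have ha : ∀ t ∈ Set.Icc 0 T, ∀ i j, |A t i j| ≤ a := by
    intro t ht i j
    have h1 : |A t i j| ≤ ‖(fun j' => A t i j')‖ := by
      rw [← Real.norm_eq_abs]
      exact norm_le_pi_norm (fun j' => A t i j') j
    have h2 : ‖(fun j' => A t i j')‖ ≤ ‖(fun i' j' => A t i' j')‖ :=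
      norm_le_pi_norm (fun i' j' => A t i' j') i
    exact h1.trans (h2.trans ((ha₀ t ht).trans (le_max_left _ _)))
  -- the derivative matrix
  set Dm : ℝ → Matrix (Fin (n+1)) (Fin (n+1)) ℝ :=
    fun t => B t * A t + (A t)ᵀ * B t + lam • B t with hDm
  -- Step 1 : symmetry
  set Cf : ℝ → (Fin (n+1) → Fin (n+1) → ℝ) := fun t i j => B t i j - B t j i with hCf
  set Cm : ℝ → Matrix (Fin (n+1)) (Fin (n+1)) ℝ := fun t => B t - (B t)ᵀ with hCm
  have hCmCf : ∀ t i j, Cm t i j = Cf t i j := by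
    intro t i j; simp [hCm, hCf, Matrix.sub_apply, Matrix.transpose_apply]
  have hCD : ∀ t, Cm t * A t + (A t)ᵀ * Cm t + lam • Cm t = Dm t - (Dm t)ᵀ := by
    intro t
    simp only [hCm, hDm, Matrix.transpose_add, Matrix.transpose_mul, Matrix.transpose_smul,
      Matrix.transpose_transpose, smul_sub]
    noncomm_ring
  have hCderiv : ∀ t ∈ Set.Icc 0 T, HasDerivWithinAt Cf
      (fun i j => (Dm t - (Dm t)ᵀ) i j) (Set.Icc 0 T) t := by
    intro t ht
    refine hasDerivWithinAt_pi.2 fun i => hasDerivWithinAt_pi.2 fun j => ?_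
    have h := (hderiv t ht i j).sub (hderiv t ht j i)
    exact h
  have hCcont : ContinuousOn Cf (Set.Icc 0 T) :=
    fun t ht => (hCderiv t ht).continuousWithinAt
  set K : ℝ := 2 * (n+1) * a + |lam| with hK_def
  have hKnn : 0 ≤ K := by positivity
  have hCbound : ∀ t ∈ Set.Ico 0 T,
      ‖(fun i j => (Dm t - (Dm t)ᵀ) i j : Fin (n+1) → Fin (n+1) → ℝ)‖ ≤ K * ‖Cf t‖ + 0 := by
    intro t ht
    rw [add_zero]
    have hKC : 0 ≤ K * ‖Cf t‖ := mul_nonneg hKnn (norm_nonneg _)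
    rw [pi_norm_le_iff_of_nonneg hKC]
    intro i
    rw [pi_norm_le_iff_of_nonneg hKC]
    intro j
    have hCnorm : ∀ i' j', |Cm t i' j'| ≤ ‖Cf t‖ := by
      intro i' j'
      rw [hCmCf]
      have h1 : |Cf t i' j'| ≤ ‖Cf t i'‖ := by
        rw [← Real.norm_eq_abs]; exact norm_le_pi_norm (Cf t i') j'
      exact h1.trans (norm_le_pi_norm (Cf t) i')
    have hentry : (Dm t - (Dm t)ᵀ) i j
        = (Cm t * A t + (A t)ᵀ * Cm t + lam • Cm t) i j := by rw [hCD]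
    rw [Real.norm_eq_abs, hentry]
    have htIcc : t ∈ Set.Icc 0 T := ⟨ht.1, ht.2.le⟩
    have h1 : |(Cm t * A t) i j| ≤ (n+1) * (‖Cf t‖ * a) := by
      rw [Matrix.mul_apply]
      calc |∑ k, Cm t i k * A t k j| ≤ ∑ k, |Cm t i k * A t k j| :=
            Finset.abs_sum_le_sum_abs _ _
        _ ≤ ∑ _k : Fin (n+1), ‖Cf t‖ * a := by
            refine Finset.sum_le_sum fun k _ => ?_
            rw [abs_mul]
            exact mul_le_mul (hCnorm i k) (ha t htIcc k j) (abs_nonneg _) (norm_nonneg _)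
        _ = (n+1) * (‖Cf t‖ * a) := by
            rw [Finset.sum_const, Finset.card_univ, Fintype.card_fin, nsmul_eq_mul]
            push_cast; ring
    have h2 : |((A t)ᵀ * Cm t) i j| ≤ (n+1) * (‖Cf t‖ * a) := by
      rw [Matrix.mul_apply]
      calc |∑ k, (A t)ᵀ i k * Cm t k j| ≤ ∑ k, |(A t)ᵀ i k * Cm t k j| :=
            Finset.abs_sum_le_sum_abs _ _
        _ ≤ ∑ _k : Fin (n+1), ‖Cf t‖ * a := by
            refine Finset.sum_le_sum fun k _ => ?_
            rw [abs_mul, Matrix.transpose_apply, mul_comm]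
            exact mul_le_mul (hCnorm k j) (ha t htIcc k i) (abs_nonneg _) (norm_nonneg _)
        _ = (n+1) * (‖Cf t‖ * a) := by
            rw [Finset.sum_const, Finset.card_univ, Fintype.card_fin, nsmul_eq_mul]
            push_cast; ring
    have h3 : |(lam • Cm t) i j| ≤ |lam| * ‖Cf t‖ := by
      rw [Matrix.smul_apply, smul_eq_mul, abs_mul]
      exact mul_le_mul_of_nonneg_left (hCnorm i j) (abs_nonneg _)
    calc |(Cm t * A t + (A t)ᵀ * Cm t + lam • Cm t) i j|
        ≤ |(Cm t * A t) i j| + |((A t)ᵀ * Cm t) i j| + |(lam • Cm t) i j| := by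
          simp only [Matrix.add_apply]
          exact (abs_add_le _ _).trans (add_le_add_left (abs_add_le _ _) _)
      _ ≤ (n+1) * (‖Cf t‖ * a) + (n+1) * (‖Cf t‖ * a) + |lam| * ‖Cf t‖ :=
          add_le_add (add_le_add h1 h2) h3
      _ = K * ‖Cf t‖ := by rw [hK_def]; push_cast; ring
  have hCf0 : Cf 0 = 0 := by
    funext i j
    simp [hCf, hB0, hB₀symm.apply i j]
  have hCzero : ∀ t ∈ Set.Icc 0 T, Cf t = 0 := by
    intro t ht
    have hgron := norm_le_gronwallBound_of_norm_deriv_right_le (f := Cf)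
      (f' := fun t => (fun i j => (Dm t - (Dm t)ᵀ) i j)) (δ := 0) (K := K) (ε := 0)
      hCcont
      (fun s hs => (hCderiv s ⟨hs.1, hs.2.le⟩).mono_of_mem_nhdsWithin
        (Icc_mem_nhdsGE_of_mem hs))
      (by rw [hCf0]; simp)
      hCbound t ht
    rw [gronwallBound_ε0_δ0] at hgron
    exact norm_le_zero_iff.1 hgron
  have hsymm : ∀ t ∈ Set.Icc 0 T, (B t).IsSymm := by
    intro t ht
    have h := hCzero t ht
    ext i j
    rw [Matrix.transpose_apply]
    have h2 := congrFun (congrFun h j) i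
    simp only [hCf, Pi.zero_apply] at h2
    linarith
  -- Step 2 : the determinant never vanishes
  have hB₀posdef : B₀.PosDef := by
    rw [Matrix.posDef_iff_dotProduct_mulVec]
    constructor
    · ext i j
      simp only [Matrix.conjTranspose_apply, star_trivial]
      exact hB₀symm.apply i j
    · intro x hx
      have hpos : 0 < ∑ i, x i ^ 2 := by
        rcases Function.ne_iff.1 hx with ⟨i, hi⟩
        have : 0 < x i ^ 2 := lt_of_le_of_ne (sq_nonneg _) (Ne.symm (pow_ne_zero 2 hi))
        exact lt_of_lt_of_le this (Finset.single_le_sum (fun j _ => sq_nonneg (x j))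
          (Finset.mem_univ i))
      have := hB₀coercive x
      simp only [star_trivial]
      nlinarith
  have hdetB₀ : 0 < B₀.det := hB₀posdef.det_pos
  have hdetderiv : ∀ t ∈ Set.Icc 0 T, HasDerivWithinAt (fun u => (B u).det)
      ((2 * (A t).trace + (n+1) * lam) * (B t).det) (Set.Icc 0 T) t := by
    intro t ht
    have h := hasDerivWithinAt_det (B := B) (B' := Dm t) (s := Set.Icc 0 T) (t := t)
      (fun i j => hderiv t ht i j)
    rw [hDm, trace_ode_adjugate (B t) (A t) lam] at h
    convert h using 2
    push_cast; ring
  have hdetcont : ContinuousOn (fun u => (B u).det) (Set.Icc 0 T) :=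
    fun t ht => (hdetderiv t ht).continuousWithinAt
  set Kg : ℝ := 2 * (n+1) * a + (n+1) * |lam| with hKg_def
  have hgbound : ∀ t ∈ Set.Icc 0 T, |2 * (A t).trace + (n+1) * lam| ≤ Kg := by
    intro t ht
    have htr : |(A t).trace| ≤ (n+1) * a := by
      rw [Matrix.trace]
      calc |∑ i, (A t).diag i| ≤ ∑ i, |(A t).diag i| := Finset.abs_sum_le_sum_abs _ _
        _ ≤ ∑ _i : Fin (n+1), a := Finset.sum_le_sum fun i _ => ha t ht i i
        _ = (n+1) * a := by
            rw [Finset.sum_const, Finset.card_univ, Fintype.card_fin, nsmul_eq_mul]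
            push_cast; ring
    calc |2 * (A t).trace + (n+1) * lam| ≤ |2 * (A t).trace| + |(n+1 : ℝ) * lam| := abs_add_le _ _
      _ ≤ 2 * ((n+1) * a) + (n+1) * |lam| := by
          rw [abs_mul, abs_mul]
          refine add_le_add ?_ ?_
          · rw [abs_two]
            exact mul_le_mul_of_nonneg_left htr (by norm_num)
          · have : |(n+1 : ℝ)| = (n+1 : ℝ) := abs_of_pos (by positivity)
            rw [this]
      _ = Kg := by rw [hKg_def]; push_cast; ring
  have hdetne : ∀ t ∈ Set.Icc 0 T, (B t).det ≠ 0 := by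
    intro t₁ ht₁ hzero
    -- reverse time Gronwall from t₁
    set F : ℝ → ℝ := fun s => (B (t₁ - s)).det with hF
    have hmaps : Set.MapsTo (fun s => t₁ - s) (Set.Icc 0 t₁) (Set.Icc 0 T) := by
      intro s hs
      simp only [Set.mem_Icc] at hs ⊢
      constructor <;> linarith [hs.1, hs.2, ht₁.1, ht₁.2]
    have hFcont : ContinuousOn F (Set.Icc 0 t₁) := by
      refine hdetcont.comp ?_ hmaps
      exact (continuous_const.sub continuous_id).continuousOn
    have hFderiv : ∀ s ∈ Set.Ico 0 t₁, HasDerivWithinAt F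
        ((2 * (A (t₁ - s)).trace + (n+1) * lam) * F s * (-1)) (Set.Ici s) s := by
      intro s hs
      have hin : t₁ - s ∈ Set.Icc 0 T := hmaps ⟨hs.1, hs.2.le⟩
      have houter := hdetderiv (t₁ - s) hin
      have hinner : HasDerivWithinAt (fun u : ℝ => t₁ - u) (-1) (Set.Icc 0 t₁) s := by
        simpa using ((hasDerivAt_id s).const_sub t₁).hasDerivWithinAt (s := Set.Icc 0 t₁)
      have hcomp := HasDerivWithinAt.comp s houter hinner hmaps
      exact hcomp.mono_of_mem_nhdsWithin (Icc_mem_nhdsGE_of_mem hs)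
    have hF0 : ‖F 0‖ ≤ 0 := by
      simp only [hF, sub_zero, hzero, norm_zero, le_refl]
    have hFbound : ∀ s ∈ Set.Ico 0 t₁,
        ‖(2 * (A (t₁ - s)).trace + (n+1) * lam) * F s * (-1)‖ ≤ Kg * ‖F s‖ + 0 := by
      intro s hs
      rw [add_zero, norm_mul, norm_neg, norm_one, mul_one, norm_mul]
      have hin : t₁ - s ∈ Set.Icc 0 T := hmaps ⟨hs.1, hs.2.le⟩
      exact mul_le_mul_of_nonneg_right (by
        rw [Real.norm_eq_abs]; exact hgbound (t₁ - s) hin) (norm_nonneg _)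
    have hgron := norm_le_gronwallBound_of_norm_deriv_right_le hFcont hFderiv hF0 hFbound
      t₁ ⟨ht₁.1, le_refl t₁⟩
    rw [gronwallBound_ε0_δ0] at hgron
    have hF1 : F t₁ = 0 := norm_le_zero_iff.1 hgron
    simp only [hF, sub_self, hB0] at hF1
    exact hdetB₀.ne' hF1
  -- Step 3 : propagation of positive semidefiniteness
  set W : Set ℝ := {t | t ∈ Set.Icc 0 T ∧
    ∀ s ∈ Set.Icc 0 t, ∀ ξ : Fin (n+1) → ℝ, 0 ≤ ξ ⬝ᵥ (B s).mulVec ξ} with hW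
  have hB₀semidef : ∀ ξ : Fin (n+1) → ℝ, 0 ≤ ξ ⬝ᵥ B₀.mulVec ξ := by
    intro ξ
    have h1 := hB₀coercive ξ
    have h2 : 0 ≤ d₀ * ∑ i, ξ i ^ 2 :=
      mul_nonneg hd₀.le (Finset.sum_nonneg fun i _ => sq_nonneg _)
    linarith
  have h0W : (0:ℝ) ∈ W := by
    refine ⟨hT0, fun s hs ξ => ?_⟩
    have : s = 0 := le_antisymm hs.2 hs.1
    rw [this, hB0]
    exact hB₀semidef ξ
  have hWbdd : BddAbove W := ⟨T, fun x hx => hx.1.2⟩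
  have hWne : W.Nonempty := ⟨0, h0W⟩
  set c := sSup W with hc
  have hc0 : 0 ≤ c := le_csSup hWbdd h0W
  have hcT : c ≤ T := csSup_le hWne fun x hx => hx.1.2
  have hcIcc : c ∈ Set.Icc 0 T := ⟨hc0, hcT⟩
  have hsemidef_lt : ∀ s, 0 ≤ s → s < c → ∀ ξ : Fin (n+1) → ℝ, 0 ≤ ξ ⬝ᵥ (B s).mulVec ξ := by
    intro s hs0 hsc ξ
    obtain ⟨t', ht'W, hst'⟩ := exists_lt_of_lt_csSup hWne hsc
    exact ht'W.2 s ⟨hs0, hst'.le⟩ ξ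
  have hsemidef_c : ∀ ξ : Fin (n+1) → ℝ, 0 ≤ ξ ⬝ᵥ (B c).mulVec ξ := by
    rcases eq_or_lt_of_le hc0 with heq | hpos
    · intro ξ
      rw [← heq, hB0]
      exact hB₀semidef ξ
    · intro ξ
      set φ : ℝ → ℝ := fun s => ξ ⬝ᵥ (B s).mulVec ξ with hφ
      have hφcont : ContinuousOn φ (Set.Icc 0 T) := by
        simp only [hφ, dotProduct, Matrix.mulVec]
        refine continuousOn_finset_sum _ fun i _ => ContinuousOn.mul continuousOn_const ?_
        exact continuousOn_finset_sum _ fun j _ =>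
          ContinuousOn.mul (hBcont i j) continuousOn_const
      have htendsto : Filter.Tendsto φ (nhdsWithin c (Set.Ico 0 c)) (nhds (φ c)) := by
        have h1 : ContinuousWithinAt φ (Set.Icc 0 T) c := hφcont c hcIcc
        exact h1.mono_left (nhdsWithin_mono c (fun x hx => ⟨hx.1, hx.2.le.trans hcT⟩))
      have hne : (nhdsWithin c (Set.Ico 0 c)).NeBot := by
        rw [← mem_closure_iff_nhdsWithin_neBot, closure_Ico hpos.ne]
        exact ⟨hc0, le_refl c⟩
      refine ge_of_tendsto htendsto ?_
      refine Filter.eventually_of_mem self_mem_nhdsWithin fun s hs => ?_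
      exact hsemidef_lt s hs.1 hs.2 ξ
  have hcW : c ∈ W := by
    refine ⟨hcIcc, fun s hs ξ => ?_⟩
    rcases lt_or_eq_of_le hs.2 with hlt | heq
    · exact hsemidef_lt s hs.1 hlt ξ
    · rw [heq]; exact hsemidef_c ξ
  -- positivity is strict wherever we have semidefiniteness
  have hstrict : ∀ t ∈ Set.Icc 0 T, (∀ ξ : Fin (n+1) → ℝ, 0 ≤ ξ ⬝ᵥ (B t).mulVec ξ) →
      ∀ ξ : Fin (n+1) → ℝ, ξ ≠ 0 → 0 < ξ ⬝ᵥ (B t).mulVec ξ := by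
    intro t ht hsd ξ hξ
    rcases lt_or_eq_of_le (hsd ξ) with h | h
    · exact h
    · exfalso
      have hzero := mulVec_eq_zero_of_semidef (hsymm t ht) hsd h.symm
      have : (B t).det = 0 := Matrix.exists_mulVec_eq_zero_iff.1 ⟨ξ, hξ, hzero⟩
      exact hdetne t ht this
  -- c = T
  have hcEq : c = T := by
    by_contra hne
    have hlt : c < T := lt_of_le_of_ne hcT hne
    have hposdef : ∀ ξ : Fin (n+1) → ℝ, ξ ≠ 0 → 0 < ξ ⬝ᵥ (B c).mulVec ξ :=
      hstrict c hcIcc hsemidef_c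
    obtain ⟨κ, hκpos, hκ⟩ := exists_coercive hposdef
    -- find δ such that entries of B stay close on [c, c+δ]
    have hBc : ContinuousWithinAt (fun t => (fun i j => B t i j : Fin (n+1) → Fin (n+1) → ℝ))
        (Set.Icc 0 T) c := by
      refine (continuousOn_pi.2 fun i => continuousOn_pi.2 fun j => hBcont i j) c hcIcc
    have hεpos : 0 < κ / (n+1) := by positivity
    rw [Metric.continuousWithinAt_iff] at hBc
    obtain ⟨δ, hδpos, hδ⟩ := hBc (κ / (n+1)) hεpos
    set t' := min (c + δ/2) T with ht'def
    have hct' : c < t' := lt_min (by linarith) hlt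
    have ht'Icc : t' ∈ Set.Icc 0 T := ⟨le_trans hc0 hct'.le, min_le_right _ _⟩
    have ht'W : t' ∈ W := by
      refine ⟨ht'Icc, fun s hs ξ => ?_⟩
      rcases le_or_gt s c with hsc | hsc
      · exact hcW.2 s ⟨hs.1, hsc⟩ ξ
      · have hsIcc : s ∈ Set.Icc 0 T := ⟨hs.1, hs.2.trans ht'Icc.2⟩
        have hdist : dist s c < δ := by
          rw [Real.dist_eq, abs_of_pos (by linarith)]
          have : s ≤ c + δ/2 := hs.2.trans (min_le_left _ _)
          linarith
        have hclose := hδ hsIcc hdist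
        have hentries : ∀ i j, |B s i j - B c i j| ≤ κ / (n+1) := by
          intro i j
          have h1 : dist (B s i j) (B c i j) ≤
              dist (fun i' j' => B s i' j' : Fin (n+1) → Fin (n+1) → ℝ)
                (fun i' j' => B c i' j') := by
            calc dist (B s i j) (B c i j)
                ≤ dist (fun j' => B s i j' : Fin (n+1) → ℝ) (fun j' => B c i j') :=
                  dist_le_pi_dist _ _ j
              _ ≤ _ := dist_le_pi_dist (fun i' j' => B s i' j' : Fin (n+1) → Fin (n+1) → ℝ)
                  (fun i' j' => B c i' j') i
          rw [Real.dist_eq] at h1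
          exact h1.trans (le_of_lt hclose)
        exact semidef_of_close hκpos hκ hentries ξ
    have : t' ≤ c := le_csSup hWbdd ht'W
    linarith
  -- conclusion
  intro t ht
  refine ⟨hsymm t ht, ?_⟩
  have hsd : ∀ ξ : Fin (n+1) → ℝ, 0 ≤ ξ ⬝ᵥ (B t).mulVec ξ := by
    intro ξ
    exact hcW.2 t ⟨ht.1, by rw [hcEq]; exact ht.2⟩ ξ
  exact hstrict t ht hsd
end

section
/- Let U ⊆ ℝ³ be open and let ν : U → ℝ³ be a C¹ vector field with |ν(x)| = 1 for all x ∈ U whose Jacobian is symmetric, i.e. ∂_i ν_j = ∂_j ν_i on U. Let h : U → ℝ be C² and define the vector field f := ν × ∇h (cross product). Then the tangential divergence of f vanishes: Σ_{i=1}^{3} D_i f_i = 0 on U, where D_i g := ∂_i g − ν_i Σ_{l=1}^{3} ν_l ∂_l g. -/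
open Matrix
open scoped BigOperators

/-- Euclidean partial derivative `∂ᵢ g (x)` of a scalar function on `ℝ^m`. -/
noncomputable def pder {m : ℕ} (g : (Fin m → ℝ) → ℝ) (i : Fin m) (x : Fin m → ℝ) : ℝ :=
  fderiv ℝ g x (Pi.single i 1)

/-- Tangential derivative `D_i g := ∂_i g − ν_i Σ_l ν_l ∂_l g` relative to the unit field `ν`. -/
noncomputable def tder {m : ℕ} (ν : (Fin m → ℝ) → Fin m → ℝ)
    (g : (Fin m → ℝ) → ℝ) (i : Fin m) (x : Fin m → ℝ) : ℝ :=
  pder g i x - ν x i * ∑ l, ν x l * pder g l x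

/-- The gradient `∇h` of a scalar function on `ℝ³`. -/
noncomputable def grad3 (h : (Fin 3 → ℝ) → ℝ) (x : Fin 3 → ℝ) : Fin 3 → ℝ :=
  fun l => pder h l x

lemma pder_mul {m : ℕ} {p q : (Fin m → ℝ) → ℝ} {x : Fin m → ℝ}
    (hp : DifferentiableAt ℝ p x) (hq : DifferentiableAt ℝ q x) (i : Fin m) :
    pder (fun y => p y * q y) i x = pder p i x * q x + p x * pder q i x := by
  simp only [pder, fderiv_fun_mul hp hq, ContinuousLinearMap.add_apply,
    ContinuousLinearMap.smul_apply, smul_eq_mul]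
  ring

lemma pder_sub {m : ℕ} {p q : (Fin m → ℝ) → ℝ} {x : Fin m → ℝ}
    (hp : DifferentiableAt ℝ p x) (hq : DifferentiableAt ℝ q x) (i : Fin m) :
    pder (fun y => p y - q y) i x = pder p i x - pder q i x := by
  simp only [pder, fderiv_fun_sub hp hq, ContinuousLinearMap.sub_apply]

lemma pder_add {m : ℕ} {p q : (Fin m → ℝ) → ℝ} {x : Fin m → ℝ}
    (hp : DifferentiableAt ℝ p x) (hq : DifferentiableAt ℝ q x) (i : Fin m) :
    pder (fun y => p y + q y) i x = pder p i x + pder q i x := by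
  simp only [pder, fderiv_fun_add hp hq, ContinuousLinearMap.add_apply]

/-- Construction of tangentially divergence-free fluxes: for a `C¹` unit vector field `ν`
with symmetric Jacobian and a `C²` scalar `h`, the field `f = ν × ∇h` satisfies
`Σ_i D_i f_i = 0`. -/
theorem cross_product_flux_tangentially_divergence_free
    (U : Set (Fin 3 → ℝ)) (hU : IsOpen U)
    (ν : (Fin 3 → ℝ) → Fin 3 → ℝ)
    (hν : ContDiffOn ℝ 1 ν U)
    (hunit : ∀ x ∈ U, ∑ l, ν x l ^ 2 = 1)
    (hsym : ∀ x ∈ U, ∀ i j, pder (fun y => ν y j) i x = pder (fun y => ν y i) j x)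
    (h : (Fin 3 → ℝ) → ℝ) (hh : ContDiffOn ℝ 2 h U)
    (f : (Fin 3 → ℝ) → Fin 3 → ℝ) (hf : ∀ x, f x = crossProduct (ν x) (grad3 h x)) :
    ∀ x ∈ U, ∑ i, tder ν (fun y => f y i) i x = 0 := by
  intro x hx
  have hxU : U ∈ nhds x := hU.mem_nhds hx
  -- differentiability of the components of ν
  have hνx : DifferentiableAt ℝ ν x := (hν.contDiffAt hxU).differentiableAt one_ne_zero
  have hνc : ∀ j : Fin 3, DifferentiableAt ℝ (fun y => ν y j) x := fun j =>
    (ContinuousLinearMap.proj (R := ℝ) (φ := fun _ : Fin 3 => ℝ) j).differentiableAt.comp x hνx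
  -- C¹ smoothness of fderiv h, differentiability of the partial derivatives of h
  have hhx : ContDiffAt ℝ 2 h x := hh.contDiffAt hxU
  have hfd : ContDiffAt ℝ 1 (fderiv ℝ h) x := hhx.fderiv_right (by norm_num)
  have hfdd : DifferentiableAt ℝ (fderiv ℝ h) x := hfd.differentiableAt one_ne_zero
  have hGdiff : ∀ j : Fin 3, DifferentiableAt ℝ (fun y => pder h j y) x := by
    intro j
    simp only [pder]
    exact hfdd.clm_apply (differentiableAt_const _)
  -- second derivatives, symmetric by Schwarz
  have hkey : ∀ i j : Fin 3, pder (fun y => pder h j y) i x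
      = fderiv ℝ (fderiv ℝ h) x (Pi.single i 1) (Pi.single j 1) := by
    intro i j
    simp only [pder]
    rw [fderiv_clm_apply hfdd (differentiableAt_const _)]
    simp
  have hschwarz : ∀ i j : Fin 3, pder (fun y => pder h j y) i x
      = pder (fun y => pder h i y) j x := by
    intro i j
    rw [hkey, hkey]
    exact hhx.isSymmSndFDerivAt (by simp [minSmoothness]) _ _
  -- derivative of the unit-norm constraint
  have hc : ∀ i : Fin 3, pder (fun y => ν y 0 * ν y 0 + (ν y 1 * ν y 1 + ν y 2 * ν y 2)) i x = 0 := by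
    intro i
    have heq : (fun y => ν y 0 * ν y 0 + (ν y 1 * ν y 1 + ν y 2 * ν y 2))
        =ᶠ[nhds x] fun _ => (1 : ℝ) := by
      filter_upwards [hxU] with y hy
      have := hunit y hy
      rw [Fin.sum_univ_three] at this
      nlinarith [this]
    simp only [pder]
    rw [heq.fderiv_eq, fderiv_fun_const]
    simp
  have hc' : ∀ i : Fin 3,
      pder (fun y => ν y 0) i x * ν x 0 + ν x 0 * pder (fun y => ν y 0) i x
      + (pder (fun y => ν y 1) i x * ν x 1 + ν x 1 * pder (fun y => ν y 1) i x
      + (pder (fun y => ν y 2) i x * ν x 2 + ν x 2 * pder (fun y => ν y 2) i x)) = 0 := by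
    intro i
    have := hc i
    rw [pder_add (by exact (hνc 0).mul (hνc 0))
        (by exact ((hνc 1).mul (hνc 1)).add ((hνc 2).mul (hνc 2))),
      pder_add (by exact (hνc 1).mul (hνc 1)) (by exact (hνc 2).mul (hνc 2)),
      pder_mul (hνc 0) (hνc 0), pder_mul (hνc 1) (hνc 1), pder_mul (hνc 2) (hνc 2)] at this
    exact this
  -- explicit form of the components of f
  have hf0 : (fun y => f y 0) = fun y => ν y 1 * pder h 2 y - ν y 2 * pder h 1 y := by
    funext y; rw [hf y]; simp [cross_apply, grad3]
  have hf1 : (fun y => f y 1) = fun y => ν y 2 * pder h 0 y - ν y 0 * pder h 2 y := by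
    funext y; rw [hf y]; simp [cross_apply, grad3]
  have hf2 : (fun y => f y 2) = fun y => ν y 0 * pder h 1 y - ν y 1 * pder h 0 y := by
    funext y; rw [hf y]; simp [cross_apply, grad3]
  -- expansion of the partial derivatives of products
  have hexp : ∀ (p q : Fin 3) (l : Fin 3),
      pder (fun y => ν y p * pder h q y) l x
      = pder (fun y => ν y p) l x * pder h q x + ν x p * pder (fun y => pder h q y) l x :=
    fun p q l => pder_mul (hνc p) (hGdiff q) l
  have hsubexp : ∀ (p q r s : Fin 3) (l : Fin 3),
      pder (fun y => ν y p * pder h q y - ν y r * pder h s y) l x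
      = pder (fun y => ν y p * pder h q y) l x - pder (fun y => ν y r * pder h s y) l x :=
    fun p q r s l => pder_sub ((hνc p).mul (hGdiff q)) ((hνc r).mul (hGdiff s)) l
  simp only [tder, Fin.sum_univ_three]
  simp only [hf0, hf1, hf2]
  simp only [hsubexp]
  simp only [hexp]

  have h0 := hc' 0; have h1 := hc' 1; have h2 := hc' 2
  rw [hsym x hx 0 1, hsym x hx 0 2] at h0
  rw [hsym x hx 1 2] at h1
  linear_combination ((ν x 1 * pder h 2 x - ν x 2 * pder h 1 x) / 2) * h0
    + ((ν x 2 * pder h 0 x - ν x 0 * pder h 2 x) / 2) * h1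
    + ((ν x 0 * pder h 1 x - ν x 1 * pder h 0 x) / 2) * h2
    + ((1 - ν x 0 ^ 2) * pder h 2 x + ν x 2 * ν x 0 * pder h 0 x) * hsym x hx 0 1
    + (pder h 1 x * ν x 0 ^ 2 - pder h 1 x - ν x 0 * ν x 1 * pder h 0 x) * hsym x hx 0 2
    + (ν x 0 * ν x 1 * pder h 1 x - ν x 1 ^ 2 * pder h 0 x + pder h 0 x) * hsym x hx 1 2
    + ν x 1 * hschwarz 0 2 - ν x 2 * hschwarz 0 1 - ν x 0 * hschwarz 1 2
end
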